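/- arXiv:2401.01725 — 2 statements merged into one kernel-verified Lean document; each statement's English description precedes it below -/
import Mathlib

section
/- Let m ≥ 2 and let A = (a_{ij}) be a nonzero m×m complex matrix. Let p = Σ_{i,j=1}^m a_{ij} e_i ⊗ e_j ∈ ℂ^m ⊗ ℂ^m, where (e_i) is the standard orthonormal basis of ℂ^m, and let e : ℂ^m ⊗ ℂ^m → ℂ^m ⊗ ℂ^m be the orthogonal projection onto the line ℂp. Then there exists λ > 0 such that (e⊗1)(1⊗e)(e⊗1) = λ^{-1}(e⊗1) as operators on (ℂ^m)^{⊗3} if and only if there exists c > 0 such that c·(A·Ā) is a unitary matrix, where Ā denotes the entrywise complex conjugate of A. -/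
noncomputable section

open scoped InnerProductSpace Matrix ComplexOrder

/-- The `n`-fold tensor power `(ℂ^m)^{⊗n}`, realized as the space of
complex-valued functions on strings in `{1,…,m}^n`. -/
abbrev TP (m n : ℕ) : Type := EuclideanSpace ℂ (Fin n → Fin m)

/-- The set of vectors `x ⊗ p ⊗ y` spanning `J^{(n)}`, where
`p = Σ_{i,j} a_{ij} e_i ⊗ e_j` is the Temperley–Lieb vector of `A`. -/
def TLset (m : ℕ) (A : Matrix (Fin m) (Fin m) ℂ) (n : ℕ) : Set (TP m n) :=
  { v | ∃ (i : ℕ) (hi : i + 2 ≤ n) (x : TP m i) (y : TP m (n - (i + 2))),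
      v = WithLp.toLp 2 fun s => x (fun j => s ⟨j.1, by have := j.isLt; omega⟩) *
        A (s ⟨i, by omega⟩) (s ⟨i + 1, by omega⟩) *
        y (fun j => s ⟨i + 2 + j.1, by have := j.isLt; omega⟩) }

/-- `J^{(n)}`, the degree-`n` component of the ideal generated by `p`. -/
def Jsp (m : ℕ) (A : Matrix (Fin m) (Fin m) ℂ) (n : ℕ) : Submodule ℂ (TP m n) :=
  Submodule.span ℂ (TLset m A n)

/-- `H_n`, the orthogonal complement of `J^{(n)}`. -/
def Hsp (m : ℕ) (A : Matrix (Fin m) (Fin m) ℂ) (n : ℕ) : Submodule ℂ (TP m n) :=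
  (Jsp m A n)ᗮ

/-- `f_n`, the orthogonal projection of `(ℂ^m)^{⊗n}` onto `H_n`. -/
def fProj (m : ℕ) (A : Matrix (Fin m) (Fin m) ℂ) (n : ℕ) : TP m n →L[ℂ] TP m n :=
  (Hsp m A n).subtypeL ∘L Submodule.orthogonalProjectionOnto (Hsp m A n)

/-- The matrix of an operator on `(ℂ^m)^{⊗k}` in the standard basis. -/
def matOf {m k : ℕ} (B : TP m k →L[ℂ] TP m k) :
    Matrix (Fin k → Fin m) (Fin k → Fin m) ℂ :=
  fun s t => B (EuclideanSpace.single t 1) s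

/-- The ampliation `B ⊗ 1^{⊗(b-a)}` of an operator `B` on `(ℂ^m)^{⊗a}`, acting on the
first `a` tensor factors of `(ℂ^m)^{⊗b}`. -/
def ampFirst (m a b : ℕ) (h : a ≤ b) (B : TP m a →L[ℂ] TP m a) : TP m b →L[ℂ] TP m b :=
  Matrix.toEuclideanCLM (𝕜 := ℂ)
    (Matrix.of fun s t : Fin b → Fin m =>
      if (fun j : Fin (b - a) => s ⟨a + j.1, by have := j.isLt; omega⟩)
          = (fun j : Fin (b - a) => t ⟨a + j.1, by have := j.isLt; omega⟩)
        then matOf B (fun j : Fin a => s ⟨j.1, by have := j.isLt; omega⟩)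
               (fun j : Fin a => t ⟨j.1, by have := j.isLt; omega⟩)
        else 0)

/-- The ampliation `1^{⊗(b-a)} ⊗ C` of an operator `C` on `(ℂ^m)^{⊗a}`, acting on the
last `a` tensor factors of `(ℂ^m)^{⊗b}`. -/
def ampLast (m a b : ℕ) (h : a ≤ b) (C : TP m a →L[ℂ] TP m a) : TP m b →L[ℂ] TP m b :=
  Matrix.toEuclideanCLM (𝕜 := ℂ)
    (Matrix.of fun s t : Fin b → Fin m =>
      if (fun j : Fin (b - a) => s ⟨j.1, by have := j.isLt; omega⟩)
          = (fun j : Fin (b - a) => t ⟨j.1, by have := j.isLt; omega⟩)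
        then matOf C (fun j : Fin a => s ⟨(b - a) + j.1, by have := j.isLt; omega⟩)
               (fun j : Fin a => t ⟨(b - a) + j.1, by have := j.isLt; omega⟩)
        else 0)

/-- Tensoring on the left with the basis vector `e_i` : the isometry
`ξ ↦ e_i ⊗ ξ` from `(ℂ^m)^{⊗n}` to `(ℂ^m)^{⊗(n+1)}`. -/
def consCLM (m n : ℕ) (i : Fin m) : TP m n →L[ℂ] TP m (n + 1) :=
  LinearMap.toContinuousLinearMap <| Matrix.toEuclideanLin <|
    Matrix.of fun (s : Fin (n + 1) → Fin m) (t : Fin n → Fin m) =>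
      if s 0 = i ∧ (fun j : Fin n => s j.succ) = t then 1 else 0

/-- Tensoring on the right with the basis vector `e_j` : the isometry
`ξ ↦ ξ ⊗ e_j` from `(ℂ^m)^{⊗n}` to `(ℂ^m)^{⊗(n+1)}`. -/
def snocCLM (m n : ℕ) (j : Fin m) : TP m n →L[ℂ] TP m (n + 1) :=
  LinearMap.toContinuousLinearMap <| Matrix.toEuclideanLin <|
    Matrix.of fun (s : Fin (n + 1) → Fin m) (t : Fin n → Fin m) =>
      if s (Fin.last n) = j ∧ (fun k : Fin n => s k.castSucc) = t then 1 else 0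

/-- The left creation operator `L_i = f_{n+1}(e_i ⊗ ·) : (ℂ^m)^{⊗n} → (ℂ^m)^{⊗(n+1)}`. -/
def Lop (m : ℕ) (A : Matrix (Fin m) (Fin m) ℂ) (n : ℕ) (i : Fin m) :
    TP m n →L[ℂ] TP m (n + 1) :=
  fProj m A (n + 1) ∘L consCLM m n i

/-- The right creation operator `R_j = f_{n+1}(· ⊗ e_j) : (ℂ^m)^{⊗n} → (ℂ^m)^{⊗(n+1)}`. -/
def Rop (m : ℕ) (A : Matrix (Fin m) (Fin m) ℂ) (n : ℕ) (j : Fin m) :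
    TP m n →L[ℂ] TP m (n + 1) :=
  fProj m A (n + 1) ∘L snocCLM m n j

/-- The left creation operator `L_i : H_n → H_{n+1}`, viewed as a map between
the fibers of the subproduct system. -/
def LopH (m : ℕ) (A : Matrix (Fin m) (Fin m) ℂ) (n : ℕ) (i : Fin m) :
    Hsp m A n →L[ℂ] Hsp m A (n + 1) :=
  Submodule.orthogonalProjectionOnto (Hsp m A (n + 1)) ∘L consCLM m n i ∘L (Hsp m A n).subtypeL

/-- The right creation operator `R_j : H_n → H_{n+1}`, viewed as a map between
the fibers of the subproduct system. -/
def RopH (m : ℕ) (A : Matrix (Fin m) (Fin m) ℂ) (n : ℕ) (j : Fin m) :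
    Hsp m A n →L[ℂ] Hsp m A (n + 1) :=
  Submodule.orthogonalProjectionOnto (Hsp m A (n + 1)) ∘L snocCLM m n j ∘L (Hsp m A n).subtypeL

/-- The vector `p = Σ_{i,j} a_{ij} e_i ⊗ e_j ∈ ℂ^m ⊗ ℂ^m`. -/
def pVec (m : ℕ) (A : Matrix (Fin m) (Fin m) ℂ) : TP m 2 :=
  WithLp.toLp 2 fun s => A (s 0) (s 1)

/-- `e`, the orthogonal projection of `ℂ^m ⊗ ℂ^m` onto the line `ℂ·p`. -/
def eProj (m : ℕ) (A : Matrix (Fin m) (Fin m) ℂ) : TP m 2 →L[ℂ] TP m 2 :=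
  (ℂ ∙ pVec m A).subtypeL ∘L Submodule.orthogonalProjectionOnto (ℂ ∙ pVec m A)

-- AUXILIARY LEMMAS (to be inserted above statement0)
namespace TLaux

open Finset

variable {m : ℕ}

lemma pVec_ne_zero (A : Matrix (Fin m) (Fin m) ℂ) (hA : A ≠ 0) : pVec m A ≠ 0 := by
  intro h
  apply hA
  ext i j
  have := congrArg (fun v : TP m 2 => v ![i, j]) h
  simpa [pVec] using this

lemma matOf_eProj (A : Matrix (Fin m) (Fin m) ℂ) (s t : Fin 2 → Fin m) :
    matOf (eProj m A) s t
      = (starRingEnd ℂ) (A (t 0) (t 1)) * A (s 0) (s 1) / ((‖pVec m A‖ ^ 2 : ℝ) : ℂ) := by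
  have h1 : (eProj m A) (EuclideanSpace.single t 1)
      = (⟪pVec m A, EuclideanSpace.single t 1⟫_ℂ / ((‖pVec m A‖ ^ 2 : ℝ) : ℂ)) • pVec m A := by
    exact Submodule.starProjection_singleton ℂ (v := pVec m A) (EuclideanSpace.single t 1)
  have h2 : matOf (eProj m A) s t
      = (⟪pVec m A, EuclideanSpace.single t 1⟫_ℂ / ((‖pVec m A‖ ^ 2 : ℝ) : ℂ)) * pVec m A s := by
    simp [matOf, h1]
  rw [h2, EuclideanSpace.inner_single_right]
  simp only [pVec, WithLp.ofLp_toLp, one_mul]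
  ring

lemma sum_succ_split {n : ℕ} (f : (Fin (n+1) → Fin m) → ℂ) :
    ∑ u, f u = ∑ a : Fin m, ∑ v : Fin n → Fin m, f (Fin.cons a v) := by
  rw [← (Fin.consEquiv (fun _ : Fin (n+1) => Fin m)).sum_comp f, Fintype.sum_prod_type]
  rfl

lemma sum_three (f : (Fin 3 → Fin m) → ℂ) :
    ∑ u, f u = ∑ a : Fin m, ∑ b : Fin m, ∑ c : Fin m,
      f (Fin.cons a (Fin.cons b (Fin.cons c default))) := by
  rw [sum_succ_split]
  refine Finset.sum_congr rfl fun a _ => ?_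
  rw [sum_succ_split]
  refine Finset.sum_congr rfl fun b _ => ?_
  rw [sum_succ_split]
  refine Finset.sum_congr rfl fun c _ => ?_
  exact Fintype.sum_unique _

@[simp] lemma cons3_zero (a b c : Fin m) (z : Fin 0 → Fin m) :
    (Fin.cons a (Fin.cons b (Fin.cons c z)) : Fin 3 → Fin m) 0 = a := rfl
@[simp] lemma cons3_one (a b c : Fin m) (z : Fin 0 → Fin m) :
    (Fin.cons a (Fin.cons b (Fin.cons c z)) : Fin 3 → Fin m) 1 = b := by
  rw [show (1 : Fin 3) = Fin.succ 0 from rfl, Fin.cons_succ, Fin.cons_zero]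
@[simp] lemma cons3_two (a b c : Fin m) (z : Fin 0 → Fin m) :
    (Fin.cons a (Fin.cons b (Fin.cons c z)) : Fin 3 → Fin m) 2 = c := by
  rw [show (2 : Fin 3) = Fin.succ 1 from rfl, Fin.cons_succ,
    show (1 : Fin 2) = Fin.succ 0 from rfl, Fin.cons_succ, Fin.cons_zero]

/-- `e ⊗ 1` as an explicit matrix. -/
def E1m (Nc : ℂ) (A : Matrix (Fin m) (Fin m) ℂ) :
    Matrix (Fin 3 → Fin m) (Fin 3 → Fin m) ℂ :=
  Matrix.of fun s t => if s 2 = t 2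
    then (starRingEnd ℂ) (A (t 0) (t 1)) * A (s 0) (s 1) / Nc else 0

/-- `1 ⊗ e` as an explicit matrix. -/
def E2m (Nc : ℂ) (A : Matrix (Fin m) (Fin m) ℂ) :
    Matrix (Fin 3 → Fin m) (Fin 3 → Fin m) ℂ :=
  Matrix.of fun s t => if s 0 = t 0
    then (starRingEnd ℂ) (A (t 1) (t 2)) * A (s 1) (s 2) / Nc else 0

lemma ampFirst_eq (B : TP m 2 →L[ℂ] TP m 2) :
    ampFirst m 2 3 (by omega) B = Matrix.toEuclideanCLM (𝕜 := ℂ)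
      (Matrix.of fun s t : Fin 3 → Fin m =>
        if s 2 = t 2 then matOf B (fun j : Fin 2 => s j.castSucc) (fun j => t j.castSucc)
        else 0) := by
  unfold ampFirst
  congr 1
  ext s t
  simp only [Matrix.of_apply]
  have h1 : ((fun j : Fin (3-2) => s ⟨2 + j.1, by have := j.isLt; omega⟩)
      = (fun j : Fin (3-2) => t ⟨2 + j.1, by have := j.isLt; omega⟩)) ↔ s 2 = t 2 := by
    constructor
    · intro h
      have := congrFun h 0
      simpa using this
    · intro h
      funext j
      fin_cases j
      simpa using h
  refine if_congr h1 ?_ rfl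
  exact congrArg₂ (matOf B)
    (funext fun j => congrArg s (Fin.ext (by simp)))
    (funext fun j => congrArg t (Fin.ext (by simp)))

lemma ampLast_eq (C : TP m 2 →L[ℂ] TP m 2) :
    ampLast m 2 3 (by omega) C = Matrix.toEuclideanCLM (𝕜 := ℂ)
      (Matrix.of fun s t : Fin 3 → Fin m =>
        if s 0 = t 0 then matOf C (fun j : Fin 2 => s j.succ) (fun j => t j.succ) else 0) := by
  unfold ampLast
  congr 1
  ext s t
  simp only [Matrix.of_apply]
  have h1 : ((fun j : Fin (3-2) => s ⟨j.1, by have := j.isLt; omega⟩)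
      = (fun j : Fin (3-2) => t ⟨j.1, by have := j.isLt; omega⟩)) ↔ s 0 = t 0 := by
    constructor
    · intro h
      have := congrFun h 0
      simpa using this
    · intro h
      funext j
      fin_cases j
      simpa using h
  refine if_congr h1 ?_ rfl
  exact congrArg₂ (matOf C)
    (funext fun j => congrArg s (Fin.ext (by simp [Fin.val_succ]; omega)))
    (funext fun j => congrArg t (Fin.ext (by simp [Fin.val_succ]; omega)))

lemma ampFirst_eProj (A : Matrix (Fin m) (Fin m) ℂ) :
    ampFirst m 2 3 (by omega) (eProj m A)
      = Matrix.toEuclideanCLM (𝕜 := ℂ) (E1m ((‖pVec m A‖ ^ 2 : ℝ) : ℂ) A) := by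
  rw [ampFirst_eq]
  congr 1
  ext s t
  simp only [Matrix.of_apply, matOf_eProj, E1m, Fin.castSucc_zero, Fin.castSucc_one]

lemma ampLast_eProj (A : Matrix (Fin m) (Fin m) ℂ) :
    ampLast m 2 3 (by omega) (eProj m A)
      = Matrix.toEuclideanCLM (𝕜 := ℂ) (E2m ((‖pVec m A‖ ^ 2 : ℝ) : ℂ) A) := by
  rw [ampLast_eq]
  congr 1
  ext s t
  simp only [Matrix.of_apply, matOf_eProj, E2m, Fin.succ_zero_eq_one, Fin.succ_one_eq_two]

lemma entry_prod (Nc : ℂ) (A : Matrix (Fin m) (Fin m) ℂ) (s t : Fin 3 → Fin m) :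
    (E1m Nc A * (E2m Nc A * E1m Nc A)) s t
      = (starRingEnd ℂ) (A (t 0) (t 1)) * A (s 0) (s 1) *
          ((A * A.map (starRingEnd ℂ))ᴴ * (A * A.map (starRingEnd ℂ))) (s 2) (t 2) / Nc ^ 3 := by
  simp only [Matrix.mul_apply, E1m, E2m, Matrix.of_apply]
  rw [sum_three]
  simp only [sum_three]
  simp only [cons3_zero, cons3_one, cons3_two]
  simp only [mul_ite, ite_mul, zero_mul, mul_zero, Finset.sum_ite_irrel,
    Finset.sum_ite_eq, Finset.sum_ite_eq', Finset.mem_univ, if_true, Finset.sum_const_zero]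
  simp only [Matrix.conjTranspose_apply, Matrix.mul_apply, Matrix.map_apply, map_sum, map_mul,
    Complex.conj_conj, Finset.sum_mul_sum, star_sum, star_mul', Complex.star_def]
  simp only [Finset.mul_sum, Finset.sum_mul, Finset.sum_div]
  refine Finset.sum_congr rfl fun x _ => ?_
  refine Finset.sum_congr rfl fun y _ => ?_
  refine Finset.sum_congr rfl fun z _ => ?_
  ring

lemma matrix_iff (A : Matrix (Fin m) (Fin m) ℂ) (hA : A ≠ 0) (Nc : ℂ) (hNc : Nc ≠ 0)
    (z : ℂ) :
    E1m Nc A * (E2m Nc A * E1m Nc A) = z • E1m Nc A ↔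
      (A * A.map (starRingEnd ℂ))ᴴ * (A * A.map (starRingEnd ℂ)) = (z * Nc ^ 2) • 1 := by
  set M := A * A.map (starRingEnd ℂ) with hM
  have hsmul : ∀ (z : ℂ) (X : Matrix (Fin 3 → Fin m) (Fin 3 → Fin m) ℂ),
      Matrix.toEuclideanCLM (𝕜 := ℂ) (z • X) = z • Matrix.toEuclideanCLM (𝕜 := ℂ) X :=
    fun z X => map_smul (Matrix.toEuclideanCLM (𝕜 := ℂ) (n := Fin 3 → Fin m)) z X
  constructor
  · intro h
    have hex : ∃ i j, A i j ≠ 0 := by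
      by_contra hc
      push_neg at hc
      exact hA (by ext i j; simpa using hc i j)
    obtain ⟨i0, j0, hij⟩ := hex
    have hw : (starRingEnd ℂ) (A i0 j0) * A i0 j0 ≠ 0 :=
      mul_ne_zero (by simpa using hij) hij
    have hc0 : (starRingEnd ℂ) (A i0 j0) ≠ 0 := by simpa using hij
    ext k l
    have hst := (Matrix.ext_iff.mpr h)
      (Fin.cons i0 (Fin.cons j0 (Fin.cons k default)))
      (Fin.cons i0 (Fin.cons j0 (Fin.cons l default)))
    rw [entry_prod] at hst
    simp only [cons3_zero, cons3_one, cons3_two, Matrix.smul_apply, E1m, Matrix.of_apply,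
      smul_eq_mul, ← hM] at hst
    by_cases hkl : k = l
    · rw [if_pos hkl] at hst
      have h2 : (Mᴴ * M) k l = z * Nc ^ 2 := by
        calc (Mᴴ * M) k l
            = ((starRingEnd ℂ) (A i0 j0) * A i0 j0)⁻¹ * Nc ^ 3 *
              ((starRingEnd ℂ) (A i0 j0) * A i0 j0 * (Mᴴ * M) k l / Nc ^ 3) := by
              field_simp
          _ = ((starRingEnd ℂ) (A i0 j0) * A i0 j0)⁻¹ * Nc ^ 3 *
              (z * ((starRingEnd ℂ) (A i0 j0) * A i0 j0 / Nc)) := by rw [hst]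
          _ = z * Nc ^ 2 := by
              field_simp
      rw [h2, Matrix.smul_apply, Matrix.one_apply, if_pos hkl, smul_eq_mul, mul_one]
    · rw [if_neg hkl, mul_zero] at hst
      rw [div_eq_zero_iff] at hst
      rcases hst with hst | hst
      · rcases mul_eq_zero.mp hst with hst' | hst'
        · exact absurd hst' hw
        · rw [hst', Matrix.smul_apply, Matrix.one_apply, if_neg hkl, smul_eq_mul, mul_zero]
      · exact absurd hst (pow_ne_zero 3 hNc)
  · intro h
    ext s t
    rw [entry_prod, ← hM, h]
    simp only [Matrix.smul_apply, Matrix.one_apply, E1m, Matrix.of_apply, smul_eq_mul]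
    by_cases hst : s 2 = t 2
    · rw [if_pos hst, if_pos hst, mul_one]
      field_simp
    · rw [if_neg hst, if_neg hst]
      simp

end TLaux


/-- `p` is a Temperley–Lieb vector, i.e.
`(e⊗1)(1⊗e)(e⊗1) = λ⁻¹ (e⊗1)` on `(ℂ^m)^{⊗3}` for some `λ > 0`, if and only if
`c·(A·Ā)` is unitary for some `c > 0`. -/
theorem statement0 (m : ℕ) (hm : 2 ≤ m) (A : Matrix (Fin m) (Fin m) ℂ)
    (hA : A ≠ 0) :
    (∃ lam : ℝ, 0 < lam ∧
        ampFirst m 2 3 (by omega) (eProj m A) ∘L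
            (ampLast m 2 3 (by omega) (eProj m A) ∘L
              ampFirst m 2 3 (by omega) (eProj m A))
          = ((lam : ℂ))⁻¹ • ampFirst m 2 3 (by omega) (eProj m A)) ↔
    (∃ c : ℝ, 0 < c ∧
        (c : ℂ) • (A * A.map (starRingEnd ℂ)) ∈ Matrix.unitaryGroup (Fin m) ℂ) := by
  classical
  have hp : pVec m A ≠ 0 := TLaux.pVec_ne_zero A hA
  set NR : ℝ := ‖pVec m A‖ ^ 2 with hNRdef
  have hNR : 0 < NR := pow_pos (norm_pos_iff.mpr hp) 2
  have hNc : ((NR : ℝ) : ℂ) ≠ 0 := Complex.ofReal_ne_zero.mpr (ne_of_gt hNR)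
  set M := A * A.map (starRingEnd ℂ) with hM
  have hsmul : ∀ (z : ℂ) (X : Matrix (Fin 3 → Fin m) (Fin 3 → Fin m) ℂ),
      Matrix.toEuclideanCLM (𝕜 := ℂ) (z • X) = z • Matrix.toEuclideanCLM (𝕜 := ℂ) X :=
    fun z X => map_smul (Matrix.toEuclideanCLM (𝕜 := ℂ) (n := Fin 3 → Fin m)) z X
  constructor
  · rintro ⟨lam, hlam, heq⟩
    rw [TLaux.ampFirst_eProj, TLaux.ampLast_eProj] at heq
    have heq2 : Matrix.toEuclideanCLM (𝕜 := ℂ)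
          (TLaux.E1m (NR : ℂ) A * (TLaux.E2m (NR : ℂ) A * TLaux.E1m (NR : ℂ) A))
        = Matrix.toEuclideanCLM (𝕜 := ℂ) (((lam : ℂ))⁻¹ • TLaux.E1m (NR : ℂ) A) := by
      rw [map_mul, map_mul, hsmul]
      exact heq
    have heq3 := EquivLike.injective _ heq2
    rw [TLaux.matrix_iff A hA _ hNc] at heq3
    have hμ : (0:ℝ) < lam⁻¹ * NR ^ 2 := by positivity
    set c : ℝ := (Real.sqrt (lam⁻¹ * NR ^ 2))⁻¹ with hcdef
    have hc : 0 < c := by positivity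
    refine ⟨c, hc, ?_⟩
    rw [Matrix.mem_unitaryGroup_iff', star_smul, Matrix.star_eq_conjTranspose,
      smul_mul_smul_comm, heq3, smul_smul]
    have hcc : c * c * (lam⁻¹ * NR ^ 2) = 1 := by
      have h1 : Real.sqrt (lam⁻¹ * NR ^ 2) * Real.sqrt (lam⁻¹ * NR ^ 2) = lam⁻¹ * NR ^ 2 :=
        Real.mul_self_sqrt hμ.le
      rw [hcdef, ← h1]
      have h2 : Real.sqrt (lam⁻¹ * NR ^ 2) ≠ 0 := by positivity
      rw [h1, ← mul_inv, h1]
      exact inv_mul_cancel₀ hμ.ne'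
    have hcoef : star ((c : ℂ)) * (c : ℂ) * ((lam : ℂ)⁻¹ * ((NR : ℝ) : ℂ) ^ 2) = 1 := by
      rw [Complex.star_def, Complex.conj_ofReal]
      have := congrArg (Complex.ofReal) hcc
      push_cast at this ⊢
      linear_combination this
    rw [hcoef, one_smul]
  · rintro ⟨c, hc, hu⟩
    have hcc0 : ((c : ℂ)) * (c : ℂ) ≠ 0 := by
      have : (c : ℂ) ≠ 0 := Complex.ofReal_ne_zero.mpr (ne_of_gt hc)
      exact mul_ne_zero this this
    rw [Matrix.mem_unitaryGroup_iff', star_smul, smul_mul_smul_comm, Complex.star_def,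
      Complex.conj_ofReal] at hu
    have hMM : Mᴴ * M = (((c : ℂ) * (c : ℂ))⁻¹) • (1 : Matrix (Fin m) (Fin m) ℂ) := by
      calc Mᴴ * M = ((c : ℂ) * (c : ℂ))⁻¹ • (((c : ℂ) * (c : ℂ)) • (Mᴴ * M)) := by
            rw [smul_smul, inv_mul_cancel₀ hcc0, one_smul]
        _ = _ := by
            rw [← Matrix.star_eq_conjTranspose, hu]
    refine ⟨NR ^ 2 * c ^ 2, by positivity, ?_⟩
    rw [TLaux.ampFirst_eProj, TLaux.ampLast_eProj]
    have key : TLaux.E1m (NR : ℂ) A * (TLaux.E2m (NR : ℂ) A * TLaux.E1m (NR : ℂ) A)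
        = (((NR ^ 2 * c ^ 2 : ℝ) : ℂ))⁻¹ • TLaux.E1m (NR : ℂ) A := by
      rw [TLaux.matrix_iff A hA _ hNc, hMM]
      congr 1
      push_cast
      field_simp
    show Matrix.toEuclideanCLM (𝕜 := ℂ) (TLaux.E1m (NR : ℂ) A) *
        (Matrix.toEuclideanCLM (𝕜 := ℂ) (TLaux.E2m (NR : ℂ) A) *
          Matrix.toEuclideanCLM (𝕜 := ℂ) (TLaux.E1m (NR : ℂ) A))
      = (((NR ^ 2 * c ^ 2 : ℝ) : ℂ))⁻¹ • Matrix.toEuclideanCLM (𝕜 := ℂ) (TLaux.E1m (NR : ℂ) A)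
    rw [← map_mul, ← map_mul, ← hsmul, key]
end
end

section
/- For every n ≥ 1 one has Σ_{i=1}^m L_i L_i* = id_{H_n}, where each L_i is viewed as a map H_{n−1} → H_n. (Equivalently, on the Fock space ⊕_{n≥0} H_n the operator 1 − Σ_{i=1}^m L_i L_i* is the rank-one projection onto H_0.) -/
noncomputable section

open scoped InnerProductSpace Matrix ComplexOrder

/-- The Hilbert-space adjoint `L_i* : H_{n+1} → H_n` of the left creation operator. -/
noncomputable def LopHadj (m : ℕ) (A : Matrix (Fin m) (Fin m) ℂ) (n : ℕ) (i : Fin m) :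
    Hsp m A (n + 1) →L[ℂ] Hsp m A n :=
  ContinuousLinearMap.adjoint (𝕜 := ℂ) (E := ↥(Hsp m A n)) (F := ↥(Hsp m A (n + 1)))
    (LopH m A n i)

def dropCLM (m n : ℕ) (i : Fin m) : TP m (n + 1) →L[ℂ] TP m n :=
  LinearMap.toContinuousLinearMap
    { toFun := fun η => (WithLp.toLp 2 (fun t => η (Fin.cons i t)) : TP m n)
      map_add' := fun _ _ => rfl
      map_smul' := fun _ _ => rfl }

lemma dropCLM_apply (m n : ℕ) (i : Fin m) (η : TP m (n+1)) (t : Fin n → Fin m) :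
    dropCLM m n i η t = η (Fin.cons i t) := rfl

lemma consCLM_apply' (m n : ℕ) (i : Fin m) (ξ : TP m n) (s : Fin (n+1) → Fin m) :
    consCLM m n i ξ s = if s 0 = i then ξ (fun j => s j.succ) else 0 := by
  simp only [consCLM, LinearMap.coe_toContinuousLinearMap', Matrix.toEuclideanLin_apply]
  show (Matrix.of _ *ᵥ _) s = _
  simp only [Matrix.mulVec, dotProduct, Matrix.of_apply]
  by_cases h : s 0 = i
  · simp [h, ite_and, Finset.sum_ite_eq]
  · simp [h, ite_and]

lemma sum_cons_drop (m n : ℕ) (η : TP m (n+1)) :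
    ∑ i : Fin m, consCLM m n i (dropCLM m n i η) = η := by
  ext s
  rw [WithLp.ofLp_sum, Finset.sum_apply]
  simp only [consCLM_apply', dropCLM_apply]
  rw [Finset.sum_ite_eq]
  simp only [Finset.mem_univ, if_true]
  show η (Fin.cons (s 0) (Fin.tail s)) = η s
  rw [Fin.cons_self_tail]

lemma consCLM_adjoint (m n : ℕ) (i : Fin m) :
    ContinuousLinearMap.adjoint (consCLM m n i) = dropCLM m n i := by
  symm
  rw [ContinuousLinearMap.eq_adjoint_iff]
  intro x y
  simp only [PiLp.inner_apply, RCLike.inner_apply, dropCLM_apply, consCLM_apply']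
  rw [← (Fin.consEquiv (fun _ : Fin (n+1) => Fin m)).sum_comp]
  rw [Fintype.sum_prod_type]
  simp only [Fin.consEquiv_apply, Fin.cons_zero, Fin.cons_succ]
  rw [Finset.sum_comm]
  congr 1
  funext t
  simp only [ite_mul, zero_mul]
  rw [Finset.sum_ite_eq' Finset.univ i]
  have ht : (fun j : Fin n => (Fin.cons i t : Fin (n+1) → Fin m) j.succ) = t := by
    funext j; simp
  simp only [Fin.consEquiv, Equiv.coe_fn_mk, Finset.mem_univ, if_true]

lemma cons_mem_Jsp (m : ℕ) (A : Matrix (Fin m) (Fin m) ℂ) (n : ℕ) (i : Fin m)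
    {v : TP m n} (hv : v ∈ Jsp m A n) : consCLM m n i v ∈ Jsp m A (n + 1) := by
  induction hv using Submodule.span_induction with
  | mem w hw =>
      obtain ⟨k, hk, x, y, rfl⟩ := hw
      apply Submodule.subset_span
      refine ⟨k + 1, by omega,
        (WithLp.toLp 2 fun u => if u ⟨0, by omega⟩ = i then x (fun j => u ⟨j.1 + 1, by have := j.isLt; omega⟩)
          else 0 : TP m (k+1)),
        (WithLp.toLp 2 fun t => y (fun j => t ⟨j.1, by have := j.isLt; omega⟩) :
          TP m ((n+1) - (k+1+2))), ?_⟩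
      ext s
      rw [consCLM_apply']
      have key : ∀ (a b : Fin (n+1)), a.1 = b.1 → s a = s b :=
        fun a b hab => congrArg s (Fin.ext hab)
      have h0 : ∀ (pf : 0 < n + 1), (⟨0, pf⟩ : Fin (n+1)) = 0 := fun _ => by ext; simp
      simp only [h0]
      split_ifs with h
      · refine congrArg₂ _ (congrArg₂ _ (congrArg x ?_) (congrArg₂ A ?_ ?_)) (congrArg y ?_)
        all_goals
          first
          | rfl
          | (exact key _ _ (by simp only [Fin.val_succ]; omega))
          | (funext j; exact key _ _ (by simp only [Fin.val_succ]; omega))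
      · simp
  | zero => simp
  | add u w _ _ hu hw => rw [map_add]; exact add_mem hu hw
  | smul c u _ hu => rw [map_smul]; exact Submodule.smul_mem _ c hu

/-- for every `n ≥ 1`, `Σ_{i=1}^m L_i L_i* = id_{H_n}`, where each
`L_i : H_{n-1} → H_n` (written here with `n` replaced by `n+1`, so the index
ranges exactly over all `n ≥ 1`). -/
theorem statement5 (m : ℕ) (hm : 2 ≤ m) (A : Matrix (Fin m) (Fin m) ℂ)
    (hA : IsUnit A)
    (hAA : A * A.map (starRingEnd ℂ) ∈ Matrix.unitaryGroup (Fin m) ℂ)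
    (n : ℕ) :
    ∑ i : Fin m, LopH m A n i ∘L LopHadj m A n i
      = ContinuousLinearMap.id ℂ (Hsp m A (n + 1)) := by
  have hadj : ∀ i : Fin m, LopHadj m A n i
      = (Submodule.orthogonalProjectionOnto (Hsp m A n)) ∘L (dropCLM m n i ∘L (Hsp m A (n+1)).subtypeL) := by
    intro i
    rw [LopHadj, LopH, ContinuousLinearMap.adjoint_comp, ContinuousLinearMap.adjoint_comp,
      Submodule.adjoint_orthogonalProjectionOnto, Submodule.adjoint_subtypeL, consCLM_adjoint]
    rfl
  ext ξ
  simp only [ContinuousLinearMap.sum_apply, ContinuousLinearMap.comp_apply, hadj,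
    ContinuousLinearMap.id_apply, Submodule.subtypeL_apply, LopH]
  have hdecomp : ∀ i : Fin m,
      ((Submodule.orthogonalProjectionOnto (Hsp m A n) (dropCLM m n i (ξ : TP m (n+1)))) : TP m n)
        = dropCLM m n i (ξ : TP m (n+1))
          - ((Submodule.orthogonalProjectionOnto (Jsp m A n) (dropCLM m n i (ξ : TP m (n+1)))) : TP m n) := by
    intro i
    have h := Submodule.starProjection_add_starProjection_orthogonal (K := Jsp m A n)
      (dropCLM m n i (ξ : TP m (n+1)))
    rw [eq_sub_iff_add_eq, add_comm]
    exact h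
  have hzero : ∀ i : Fin m,
      Submodule.orthogonalProjectionOnto (Hsp m A (n+1)) (consCLM m n i
        ((Submodule.orthogonalProjectionOnto (Jsp m A n) (dropCLM m n i (ξ : TP m (n+1)))) : TP m n)) = 0 :=
    fun i => Submodule.orthogonalProjectionOnto_apply_of_mem_orthogonal
      (Submodule.le_orthogonal_orthogonal _ (cons_mem_Jsp m A n i (SetLike.coe_mem _)))
  have key : ∀ i : Fin m,
      Submodule.orthogonalProjectionOnto (Hsp m A (n+1)) (consCLM m n i
        ((Submodule.orthogonalProjectionOnto (Hsp m A n) (dropCLM m n i (ξ : TP m (n+1)))) : TP m n))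
      = Submodule.orthogonalProjectionOnto (Hsp m A (n+1)) (consCLM m n i
          (dropCLM m n i (ξ : TP m (n+1)))) := by
    intro i
    rw [hdecomp i, map_sub, map_sub, hzero i, sub_zero]
  rw [Finset.sum_congr rfl (fun i _ => key i), ← map_sum, sum_cons_drop,
    Submodule.orthogonalProjectionOnto_mem_subspace_eq_self]
end
end
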